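/- For every pair of natural numbers s < d, there exists a prime p such that the d-dimensional vector space F_p^d contains an s-dimensional subspace in general position with respect to the canonical basis. -/

import Mathlib

lemma vdm_zero {K : Type*} [Field K] {n : ℕ} (g : Fin n → K) (hg : Function.Injective g)
    (c : Fin n → K) (h : ∀ k, ∑ i, c i * g k ^ (i : ℕ) = 0) : c = 0 := by
  have hdet : (Matrix.vandermonde g).det ≠ 0 := (Matrix.det_vandermonde_ne_zero_iff).mpr hg
  have hmv : (Matrix.vandermonde g).mulVec c = 0 := by
    funext k
    simpa [Matrix.mulVec, Matrix.vandermonde, dotProduct, mul_comm] using h k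
  exact Matrix.eq_zero_of_mulVec_eq_zero hdet hmv

/-- For every pair of natural numbers `s < d` there is a prime `p` such that
`F_p^d` contains an `s`-dimensional subspace in general position with respect
to the canonical basis: any basis of the subspace together with any `d − s`
distinct canonical basis vectors is linearly independent. -/
theorem exists_subspace_in_general_position (d s : ℕ) (hsd : s < d) :
    ∃ p : ℕ, p.Prime ∧ ∃ _ : Fact p.Prime,
      ∃ U : Submodule (ZMod p) (Fin d → ZMod p),
        Module.finrank (ZMod p) U = s ∧
        ∀ (v : Module.Basis (Fin s) (ZMod p) U) (π : Fin (d - s) → Fin d),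
          Function.Injective π →
          LinearIndependent (ZMod p)
            (Sum.elim (fun i : Fin s => (v i : Fin d → ZMod p))
              (fun j : Fin (d - s) => Pi.basisFun (ZMod p) (Fin d) (π j))) := by
  obtain ⟨p, hpd, hp⟩ := Nat.exists_infinite_primes d
  haveI hfact : Fact p.Prime := ⟨hp⟩
  refine ⟨p, hp, hfact, ?_⟩
  -- the "moment curve" vectors
  set e : Fin d → ZMod p := fun j => ((j : ℕ) : ZMod p) with he_def
  have he : Function.Injective e := by
    intro a b hab
    have ha : ((a : ℕ) : ZMod p).val = (a : ℕ) := ZMod.val_cast_of_lt (lt_of_lt_of_le a.isLt hpd)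
    have hb : ((b : ℕ) : ZMod p).val = (b : ℕ) := ZMod.val_cast_of_lt (lt_of_lt_of_le b.isLt hpd)
    have : (a : ℕ) = (b : ℕ) := by rw [← ha, ← hb]; exact congrArg ZMod.val hab
    exact Fin.ext this
  set f : Fin s → (Fin d → ZMod p) := fun i j => e j ^ (i : ℕ) with hf_def
  -- key: coefficients vanish if the poly vanishes at s distinct points
  have key : ∀ (σ : Fin s → Fin d), Function.Injective σ → ∀ c : Fin s → ZMod p,
      (∀ k, (∑ i, c i • f i) (σ k) = 0) → c = 0 := by
    intro σ hσ c hc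
    refine vdm_zero (fun k => e (σ k)) (he.comp hσ) c (fun k => ?_)
    have := hc k
    simpa [hf_def, Finset.sum_apply] using this
  have hf : LinearIndependent (ZMod p) f := by
    rw [Fintype.linearIndependent_iff]
    intro c hc i
    have hσ : Function.Injective (Fin.castLE hsd.le) := Fin.castLE_injective hsd.le
    have := key (Fin.castLE hsd.le) hσ c (fun k => by rw [hc]; rfl)
    exact congrFun this i
  refine ⟨Submodule.span (ZMod p) (Set.range f), ?_, ?_⟩
  · rw [finrank_span_eq_card hf]; simp
  · intro v π hπ
    -- complement enumeration
    set F : Finset (Fin d) := (Finset.univ.image π)ᶜ with hF_def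
    have hFcard : F.card = s := by
      rw [hF_def, Finset.card_compl, Finset.card_image_of_injective _ hπ]
      simp [Nat.sub_sub_self hsd.le]
    set σ : Fin s → Fin d := fun k => (F.orderIsoOfFin hFcard k : Fin d) with hσ_def
    have hσinj : Function.Injective σ := by
      intro a b hab
      exact (F.orderIsoOfFin hFcard).injective (Subtype.ext hab)
    have hσF : ∀ k, σ k ∈ F := fun k => (F.orderIsoOfFin hFcard k).2
    have hσπ : ∀ k j, π j ≠ σ k := by
      intro k j hkj
      have := hσF k
      rw [hF_def, Finset.mem_compl] at this
      exact this (hkj ▸ Finset.mem_image_of_mem π (Finset.mem_univ j))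
    apply LinearIndependent.sum_type
    · exact v.linearIndependent.map' (Submodule.span (ZMod p) (Set.range f)).subtype
        (Submodule.ker_subtype _)
    · exact (Pi.basisFun (ZMod p) (Fin d)).linearIndependent.comp π hπ
    · have hspan1 : Submodule.span (ZMod p)
          (Set.range fun i : Fin s => (v i : Fin d → ZMod p)) =
          Submodule.span (ZMod p) (Set.range f) := by
        have : (Set.range fun i : Fin s => (v i : Fin d → ZMod p)) =
            (Submodule.span (ZMod p) (Set.range f)).subtype '' Set.range v := by
          rw [← Set.range_comp]; rfl
        rw [this, ← Submodule.map_span, v.span_eq, Submodule.map_top,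
          Submodule.range_subtype]
      rw [hspan1, Submodule.disjoint_def]
      intro x hxU hxS
      obtain ⟨c, hc⟩ := (Submodule.mem_span_range_iff_exists_fun _).mp hxU
      obtain ⟨b, hb⟩ := (Submodule.mem_span_range_iff_exists_fun _).mp hxS
      have hzero : ∀ k, x (σ k) = 0 := by
        intro k
        rw [← hb]
        simp only [Finset.sum_apply, Pi.smul_apply]
        refine Finset.sum_eq_zero fun j _ => ?_
        have : (Pi.basisFun (ZMod p) (Fin d) (π j)) (σ k) = 0 := by
          simp [Pi.basisFun_apply, Pi.single_apply, hσπ k j]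
        rw [this, smul_zero]
      have hc0 : c = 0 := key σ hσinj c (fun k => by rw [hc]; exact hzero k)
      rw [← hc, hc0]
      simp
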